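/- Let n ≥ 2 and m ≤ n+1 be positive integers. Then the chromatic number of the exponential graph K_m^{M(M(K_n))} equals m. -/

import Mathlib

/-- A finite graph in the sense of the paper: a symmetric adjacency relation,
loops are allowed. -/
structure SGraph (V : Type) where
  Adj : V → V → Prop
  symm : ∀ {u v}, Adj u v → Adj v u

namespace SGraph

variable {α β : Type}

/-- The complete graph `K_m` on vertex set `Fin m`. -/
def completeG (m : ℕ) : SGraph (Fin m) :=
  ⟨fun i j => i ≠ j, fun h => h.symm⟩

/-- `f` is a graph homomorphism from `G` to `H`. -/
def IsHom (G : SGraph α) (H : SGraph β) (f : α → β) : Prop :=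
  ∀ ⦃u v⦄, G.Adj u v → H.Adj (f u) (f v)

/-- `G` admits a proper coloring with `n` colors. -/
def Colorable (G : SGraph α) (n : ℕ) : Prop :=
  ∃ f : α → Fin n, G.IsHom (completeG n) f

/-- The chromatic number of `G`, as an extended natural number. -/
noncomputable def chromNum (G : SGraph α) : ℕ∞ :=
  sInf ((fun k : ℕ => (k : ℕ∞)) '' {k | G.Colorable k})

/-- The neighborhood of a vertex. -/
def neighborSet (G : SGraph α) (v : α) : Set α := {w | G.Adj v w}

/-- The categorical product `G × H`. -/
def tensor (G : SGraph α) (H : SGraph β) : SGraph (α × β) :=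
  ⟨fun p q => G.Adj p.1 q.1 ∧ H.Adj p.2 q.2, fun h => ⟨G.symm h.1, H.symm h.2⟩⟩

/-- The exponential graph `K_m^G`: vertices are all set maps `V(G) → [m]`,
and `f` is adjacent to `g` iff `f u ≠ g v` for every edge `(u,v)` of `G`
(loops are allowed). -/
def expG (G : SGraph α) (m : ℕ) : SGraph (α → Fin m) :=
  ⟨fun f g => ∀ u v, G.Adj u v → f u ≠ g v,
   fun {f g} h u v huv e => h v u (G.symm huv) e.symm⟩

/-- `G` is connected: nonempty and any two vertices are joined by a walk. -/
def Connected (G : SGraph α) : Prop :=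
  Nonempty α ∧ ∀ u v : α, Relation.ReflTransGen G.Adj u v

/-- Property `P` of the paper: `G` is simple, and for any two disjoint edges
`(v1,w1)` and `(v2,w2)`, if `(v2,v1)` is an edge then `(w2,v1)` or `(w2,w1)`
is an edge. -/
def PropertyP (G : SGraph α) : Prop :=
  (∀ v, ¬ G.Adj v v) ∧
  ∀ ⦃v1 w1 v2 w2 : α⦄, G.Adj v1 w1 → G.Adj v2 w2 →
    v1 ≠ v2 → v1 ≠ w2 → w1 ≠ v2 → w1 ≠ w2 →
    G.Adj v2 v1 → (G.Adj w2 v1 ∨ G.Adj w2 w1)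

/-- Base (unsymmetrized) relation for the Mycielskian:
level-0 copies are adjacent as in `G`, a level-1 vertex is adjacent to the
level-0 copies of the neighbours of its shadow, and the apex `none` is
adjacent to all level-1 vertices. -/
def mycRel (G : SGraph α) : Option (α × Bool) → Option (α × Bool) → Prop
  | some (a, false), some (b, false) => G.Adj a b
  | some (a, true), some (b, false) => G.Adj a b
  | none, some (_, true) => True
  | _, _ => False

/-- The Mycielskian `M(G)`. -/
def myc (G : SGraph α) : SGraph (Option (α × Bool)) :=
  ⟨fun u v => G.mycRel u v ∨ G.mycRel v u, fun h => h.symm⟩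

/-- The double Mycielskian `M(M(K_n))`. -/
def MMK (n : ℕ) : SGraph (Option (Option (Fin n × Bool) × Bool)) :=
  myc (myc (completeG n))

/-- The vertex `(x, i, j)` of `M(M(K_n))`. -/
def vtx {n : ℕ} (x : Fin n) (i j : Bool) : Option (Option (Fin n × Bool) × Bool) :=
  some (some (x, i), j)

/-- The vertex `w_i = (*, i)` of `M(M(K_n))` for `i ∈ {0,1}`. -/
def wv (n : ℕ) (i : Bool) : Option (Option (Fin n × Bool) × Bool) :=
  some (none, i)

/-- The apex vertex `w_2` of `M(M(K_n))`. -/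
def w2 (n : ℕ) : Option (Option (Fin n × Bool) × Bool) := none

end SGraph

open SGraph


namespace Graph

variable {n m : ℕ}

/-- Vertex type of `MMK n`. -/
abbrev VV (n : ℕ) : Type := Option (Option (Fin n × Bool) × Bool)

/-- Components of a map on the vertices of `MMK n`. -/
def cA (f : VV n → Fin m) (x : Fin n) : Fin m := f (vtx x false false)
def cB (f : VV n → Fin m) (x : Fin n) : Fin m := f (vtx x true false)
def cC (f : VV n → Fin m) (x : Fin n) : Fin m := f (vtx x false true)
def cD (f : VV n → Fin m) (x : Fin n) : Fin m := f (vtx x true true)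
def cp (f : VV n → Fin m) : Fin m := f (wv n false)
def cq (f : VV n → Fin m) : Fin m := f (wv n true)
def cr (f : VV n → Fin m) : Fin m := f (w2 n)

/-- Adjacency of two maps in the exponential graph, unfolded. -/
def ADJ (f g : VV n → Fin m) : Prop := ∀ u v, (MMK n).Adj u v → f u ≠ g v

lemma ADJ.symm {f g : VV n → Fin m} (h : ADJ f g) : ADJ g f :=
  fun u v huv e => h v u ((MMK n).symm huv) e.symm

/- Adjacency instances in `MMK n`. -/
lemma aAA {x y : Fin n} (h : x ≠ y) : (MMK n).Adj (vtx x false false) (vtx y false false) := by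
  left; left; show (completeG n).Adj x y; exact h
lemma aAB {x y : Fin n} (h : x ≠ y) : (MMK n).Adj (vtx x false false) (vtx y true false) := by
  left; right; show (completeG n).Adj y x; exact Ne.symm h
lemma aAC {x y : Fin n} (h : x ≠ y) : (MMK n).Adj (vtx x false false) (vtx y false true) := by
  right; left; show (completeG n).Adj y x; exact Ne.symm h
lemma aAD {x y : Fin n} (h : x ≠ y) : (MMK n).Adj (vtx x false false) (vtx y true true) := by
  right; left; show (completeG n).Adj y x; exact Ne.symm h
lemma aBC {x y : Fin n} (h : x ≠ y) : (MMK n).Adj (vtx x true false) (vtx y false true) := by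
  right; right; show (completeG n).Adj x y; exact h
lemma apB (x : Fin n) : (MMK n).Adj (wv n false) (vtx x true false) := by
  left; left; trivial
lemma apD (x : Fin n) : (MMK n).Adj (wv n false) (vtx x true true) := by
  right; right; trivial
lemma aqB (x : Fin n) : (MMK n).Adj (wv n true) (vtx x true false) := by
  left; left; trivial
lemma arC (x : Fin n) : (MMK n).Adj (w2 n) (vtx x false true) := by
  left; trivial
lemma arD (x : Fin n) : (MMK n).Adj (w2 n) (vtx x true true) := by
  left; trivial
lemma arq : (MMK n).Adj (w2 n) (wv n true) := by
  left; trivial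

section Facts
variable {f g : VV n → Fin m}

lemma fAA (h : ADJ f g) {x y : Fin n} (hxy : x ≠ y) : cA f x ≠ cA g y := h _ _ (aAA hxy)
lemma fAB (h : ADJ f g) {x y : Fin n} (hxy : x ≠ y) : cA f x ≠ cB g y := h _ _ (aAB hxy)
lemma fBA (h : ADJ f g) {x y : Fin n} (hxy : x ≠ y) : cB f x ≠ cA g y := h _ _ ((MMK n).symm (aAB (Ne.symm hxy)))
lemma fAC (h : ADJ f g) {x y : Fin n} (hxy : x ≠ y) : cA f x ≠ cC g y := h _ _ (aAC hxy)
lemma fCA (h : ADJ f g) {x y : Fin n} (hxy : x ≠ y) : cC f x ≠ cA g y := h _ _ ((MMK n).symm (aAC (Ne.symm hxy)))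
lemma fAD (h : ADJ f g) {x y : Fin n} (hxy : x ≠ y) : cA f x ≠ cD g y := h _ _ (aAD hxy)
lemma fDA (h : ADJ f g) {x y : Fin n} (hxy : x ≠ y) : cD f x ≠ cA g y := h _ _ ((MMK n).symm (aAD (Ne.symm hxy)))
lemma fBC (h : ADJ f g) {x y : Fin n} (hxy : x ≠ y) : cB f x ≠ cC g y := h _ _ (aBC hxy)
lemma fCB (h : ADJ f g) {x y : Fin n} (hxy : x ≠ y) : cC f x ≠ cB g y := h _ _ ((MMK n).symm (aBC (Ne.symm hxy)))
lemma fpB (h : ADJ f g) (x : Fin n) : cp f ≠ cB g x := h _ _ (apB x)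
lemma fBp (h : ADJ f g) (x : Fin n) : cB f x ≠ cp g := h _ _ ((MMK n).symm (apB x))
lemma fpD (h : ADJ f g) (x : Fin n) : cp f ≠ cD g x := h _ _ (apD x)
lemma fDp (h : ADJ f g) (x : Fin n) : cD f x ≠ cp g := h _ _ ((MMK n).symm (apD x))
lemma fqB (h : ADJ f g) (x : Fin n) : cq f ≠ cB g x := h _ _ (aqB x)
lemma fBq (h : ADJ f g) (x : Fin n) : cB f x ≠ cq g := h _ _ ((MMK n).symm (aqB x))
lemma frC (h : ADJ f g) (x : Fin n) : cr f ≠ cC g x := h _ _ (arC x)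
lemma fCr (h : ADJ f g) (x : Fin n) : cC f x ≠ cr g := h _ _ ((MMK n).symm (arC x))
lemma frD (h : ADJ f g) (x : Fin n) : cr f ≠ cD g x := h _ _ (arD x)
lemma fDr (h : ADJ f g) (x : Fin n) : cD f x ≠ cr g := h _ _ ((MMK n).symm (arD x))
lemma frq (h : ADJ f g) : cr f ≠ cq g := h _ _ arq
lemma fqr (h : ADJ f g) : cq f ≠ cr g := h _ _ ((MMK n).symm arq)

end Facts

lemma pickNe {x y : Fin n} (hxy : x ≠ y) (z : Fin n) : x ≠ z ∨ y ≠ z := by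
  rcases eq_or_ne x z with rfl | h
  · exact Or.inr (Ne.symm hxy)
  · exact Or.inl h

lemma pigeon (hnm : m ≤ n + 1) {A : Fin n → Fin m} (hinj : ∀ a b, A a = A b → a = b)
    {d1 d2 : Fin m} (h12 : d1 ≠ d2) (h1 : ∀ z, A z ≠ d1) (h2 : ∀ z, A z ≠ d2) : False := by
  classical
  have hm2 : 2 ≤ m := by
    have hv : d1.val ≠ d2.val := fun hv => h12 (Fin.ext hv)
    have := d1.isLt; have := d2.isLt; omega
  have hsub : (Finset.univ.image A) ⊆ (Finset.univ.erase d1).erase d2 := by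
    intro t ht
    simp only [Finset.mem_image] at ht
    obtain ⟨z, -, rfl⟩ := ht
    simp [Finset.mem_erase, h1 z, h2 z]
  have hc1 : (Finset.univ.image A).card = n := by
    rw [Finset.card_image_of_injective _ (fun a b hab => hinj a b hab)]
    simp
  have hle := Finset.card_le_card hsub
  rw [hc1] at hle
  have e1 : (Finset.univ.erase d1).card = m - 1 := by
    rw [Finset.card_erase_of_mem (Finset.mem_univ d1)]; simp
  have hmem : d2 ∈ Finset.univ.erase d1 := Finset.mem_erase.mpr ⟨Ne.symm h12, Finset.mem_univ _⟩
  rw [Finset.card_erase_of_mem hmem, e1] at hle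
  omega

end Graph
namespace Graph

variable {n m : ℕ}

/-- The shapes of edges of `MMK n`. -/
inductive Sh {n : ℕ} : VV n → VV n → Prop
  | AA (x y : Fin n) (h : x ≠ y) : Sh (vtx x false false) (vtx y false false)
  | BA (x y : Fin n) (h : x ≠ y) : Sh (vtx x true false) (vtx y false false)
  | pB (x : Fin n) : Sh (wv n false) (vtx x true false)
  | CA (x y : Fin n) (h : x ≠ y) : Sh (vtx x false true) (vtx y false false)
  | CB (x y : Fin n) (h : x ≠ y) : Sh (vtx x false true) (vtx y true false)
  | DA (x y : Fin n) (h : x ≠ y) : Sh (vtx x true true) (vtx y false false)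
  | Dp (x : Fin n) : Sh (vtx x true true) (wv n false)
  | qB (x : Fin n) : Sh (wv n true) (vtx x true false)
  | rC (x : Fin n) : Sh (w2 n) (vtx x false true)
  | rD (x : Fin n) : Sh (w2 n) (vtx x true true)
  | rq : Sh (w2 n) (wv n true)

lemma mycRel_shape {a b : VV n} (h : SGraph.mycRel (myc (completeG n)) a b) :
    Sh a b ∨ Sh b a := by
  rcases a with - | ⟨a1, ja⟩
  · -- a = none
    rcases b with - | ⟨b1, jb⟩
    · cases h
    · cases jb
      · cases h
      · rcases b1 with - | ⟨y, i⟩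
        · exact Or.inl Sh.rq
        · cases i
          · exact Or.inl (Sh.rC y)
          · exact Or.inl (Sh.rD y)
  · rcases b with - | ⟨b1, jb⟩
    · cases ja <;> cases h
    · cases ja <;> cases jb
      · -- outer (false,false) : h : (myc (completeG n)).Adj a1 b1
        have h' : (myc (completeG n)).Adj a1 b1 := h
        rcases a1 with - | ⟨x, i⟩ <;> rcases b1 with - | ⟨y, i'⟩
        · rcases h' with h' | h' <;> cases h'
        · cases i'
          · rcases h' with h' | h' <;> cases h'
          · exact Or.inl (Sh.pB y)
        · cases i
          · rcases h' with h' | h' <;> cases h'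
          · exact Or.inr (Sh.pB x)
        · cases i <;> cases i'
          · rcases h' with h' | h'
            · exact Or.inl (Sh.AA x y (show x ≠ y from h'))
            · exact Or.inl (Sh.AA x y (Ne.symm (show y ≠ x from h')))
          · rcases h' with h' | h'
            · cases h'
            · exact Or.inr (Sh.BA y x (show y ≠ x from h'))
          · rcases h' with h' | h'
            · exact Or.inl (Sh.BA x y (show x ≠ y from h'))
            · cases h'
          · rcases h' with h' | h' <;> cases h'
      · -- outer (false,true) : impossible
        cases h
      · -- outer (true,false) : h : (myc (completeG n)).Adj a1 b1, a at level 1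
        have h' : (myc (completeG n)).Adj a1 b1 := h
        rcases a1 with - | ⟨x, i⟩ <;> rcases b1 with - | ⟨y, i'⟩
        · rcases h' with h' | h' <;> cases h'
        · cases i'
          · rcases h' with h' | h' <;> cases h'
          · exact Or.inl (Sh.qB y)
        · cases i
          · rcases h' with h' | h' <;> cases h'
          · exact Or.inl (Sh.Dp x)
        · cases i <;> cases i'
          · rcases h' with h' | h'
            · exact Or.inl (Sh.CA x y (show x ≠ y from h'))
            · exact Or.inl (Sh.CA x y (Ne.symm (show y ≠ x from h')))
          · rcases h' with h' | h'
            · cases h'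
            · exact Or.inl (Sh.CB x y (Ne.symm (show y ≠ x from h')))
          · rcases h' with h' | h'
            · exact Or.inl (Sh.DA x y (show x ≠ y from h'))
            · cases h'
          · rcases h' with h' | h' <;> cases h'
      · cases h
lemma adj_shapes {u v : VV n} (h : (MMK n).Adj u v) : Sh u v ∨ Sh v u := by
  rcases h with h | h
  · exact mycRel_shape h
  · exact (mycRel_shape h).symm

/-- Witness predicates for the five cases of the colouring rule. -/
def W1 (f : VV n → Fin m) (c : Fin m) : Prop := ∃ x y : Fin n, x ≠ y ∧ cA f x = c ∧ cA f y = c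
def W2 (f : VV n → Fin m) (c : Fin m) : Prop := cp f = c ∧ ∃ x, cB f x = c
def W3 (f : VV n → Fin m) (c : Fin m) : Prop := ∃ x y : Fin n, x ≠ y ∧ cB f x = c ∧ cA f y = c
def W4 (f : VV n → Fin m) (c : Fin m) : Prop :=
  cr f = c ∧ ((∃ x, cC f x = c) ∨ (∃ x, cD f x = c) ∨ cq f = c)
def W5 (f : VV n → Fin m) (c : Fin m) : Prop :=
  (∃ x y : Fin n, x ≠ y ∧ cC f x = c ∧ cA f y = c) ∨
  (∃ x y : Fin n, x ≠ y ∧ cC f x = c ∧ cB f y = c) ∨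
  (∃ x y : Fin n, x ≠ y ∧ cD f x = c ∧ cA f y = c) ∨
  (∃ x, cD f x = c ∧ cp f = c) ∨
  (∃ x, cq f = c ∧ cB f x = c)

/-- Negations of the five cases. -/
def N1 (f : VV n → Fin m) : Prop := ∀ x y : Fin n, x ≠ y → cA f x ≠ cA f y
def N2 (f : VV n → Fin m) : Prop := ∀ x, cp f ≠ cB f x
def N3 (f : VV n → Fin m) : Prop := ∀ x y : Fin n, x ≠ y → cB f x ≠ cA f y
def N4 (f : VV n → Fin m) : Prop :=
  (∀ x, cr f ≠ cC f x) ∧ (∀ x, cr f ≠ cD f x) ∧ cr f ≠ cq f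
def N5 (f : VV n → Fin m) : Prop :=
  (∀ x y : Fin n, x ≠ y → cC f x ≠ cA f y) ∧ (∀ x y : Fin n, x ≠ y → cC f x ≠ cB f y) ∧
  (∀ x y : Fin n, x ≠ y → cD f x ≠ cA f y) ∧ (∀ x, cD f x ≠ cp f) ∧ (∀ x, cq f ≠ cB f x)

lemma N1.inj {f : VV n → Fin m} (h : N1 f) : ∀ a b, cA f a = cA f b → a = b := by
  intro a b e; by_contra hne; exact h a b hne e

open Classical in
noncomputable def col (f : VV n → Fin m) : Fin m :=
  if h : ∃ c, W1 f c then h.choose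
  else if h : ∃ c, W2 f c then h.choose
  else if h : ∃ c, W3 f c then h.choose
  else if h : ∃ c, W4 f c then h.choose
  else if h : ∃ c, W5 f c then h.choose
  else cr f

lemma colSpec (f : VV n → Fin m) :
    W1 f (col f) ∨
    (N1 f ∧ W2 f (col f)) ∨
    (N1 f ∧ N2 f ∧ W3 f (col f)) ∨
    (N1 f ∧ N2 f ∧ N3 f ∧ W4 f (col f)) ∨
    (N1 f ∧ N2 f ∧ N3 f ∧ N4 f ∧ W5 f (col f)) ∨
    (N1 f ∧ N2 f ∧ N3 f ∧ N4 f ∧ N5 f) := by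
  classical
  have n1 : ¬(∃ c, W1 f c) → N1 f := fun hne x y hxy e => hne ⟨cA f x, x, y, hxy, rfl, e.symm⟩
  have n2 : ¬(∃ c, W2 f c) → N2 f := fun hne x e => hne ⟨cp f, rfl, x, e.symm⟩
  have n3 : ¬(∃ c, W3 f c) → N3 f := fun hne x y hxy e => hne ⟨cB f x, x, y, hxy, rfl, e.symm⟩
  have n4 : ¬(∃ c, W4 f c) → N4 f := fun hne =>
    ⟨fun x e => hne ⟨cr f, rfl, Or.inl ⟨x, e.symm⟩⟩,
     fun x e => hne ⟨cr f, rfl, Or.inr (Or.inl ⟨x, e.symm⟩)⟩,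
     fun e => hne ⟨cr f, rfl, Or.inr (Or.inr e.symm)⟩⟩
  have n5 : ¬(∃ c, W5 f c) → N5 f := fun hne =>
    ⟨fun x y hxy e => hne ⟨cC f x, Or.inl ⟨x, y, hxy, rfl, e.symm⟩⟩,
     fun x y hxy e => hne ⟨cC f x, Or.inr (Or.inl ⟨x, y, hxy, rfl, e.symm⟩)⟩,
     fun x y hxy e => hne ⟨cD f x, Or.inr (Or.inr (Or.inl ⟨x, y, hxy, rfl, e.symm⟩))⟩,
     fun x e => hne ⟨cD f x, Or.inr (Or.inr (Or.inr (Or.inl ⟨x, rfl, e.symm⟩)))⟩,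
     fun x e => hne ⟨cq f, Or.inr (Or.inr (Or.inr (Or.inr ⟨x, rfl, e.symm⟩)))⟩⟩
  unfold col
  split_ifs with h1 h2 h3 h4 h5
  · exact Or.inl h1.choose_spec
  · exact Or.inr (Or.inl ⟨n1 h1, h2.choose_spec⟩)
  · exact Or.inr (Or.inr (Or.inl ⟨n1 h1, n2 h2, h3.choose_spec⟩))
  · exact Or.inr (Or.inr (Or.inr (Or.inl ⟨n1 h1, n2 h2, n3 h3, h4.choose_spec⟩)))
  · exact Or.inr (Or.inr (Or.inr (Or.inr (Or.inl ⟨n1 h1, n2 h2, n3 h3, n4 h4, h5.choose_spec⟩))))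
  · exact Or.inr (Or.inr (Or.inr (Or.inr (Or.inr ⟨n1 h1, n2 h2, n3 h3, n4 h4, n5 h5⟩))))

end Graph
namespace Graph

variable {n m : ℕ}

lemma myc_colorable {α : Type} {G : SGraph α} {k : ℕ} (hk : 1 ≤ k)
    (h : (myc G).Colorable (k + 1)) : G.Colorable k := by
  classical
  obtain ⟨f, hf⟩ := h
  set a := f none with ha
  set c' : α → Fin (k + 1) := fun x =>
    if f (some (x, false)) = a then f (some (x, true)) else f (some (x, false)) with hc'
  have hc'ne : ∀ x, c' x ≠ a := by
    intro x
    by_cases hx : f (some (x, false)) = a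
    · simp only [hc', hx, if_pos]
      intro e
      have hadj : (myc G).Adj none (some (x, true)) := Or.inl trivial
      exact hf hadj e.symm
    · simp only [hc', hx, if_neg, not_false_iff]
      exact hx
  have hc'hom : ∀ x y, G.Adj x y → c' x ≠ c' y := by
    intro x y hxy
    by_cases hx : f (some (x, false)) = a <;> by_cases hy : f (some (y, false)) = a <;>
      simp only [hc', hx, hy, if_pos, if_neg, not_false_iff]
    · -- both then : impossible since level-0 copies adjacent
      have hadj : (myc G).Adj (some (x, false)) (some (y, false)) := Or.inl hxy
      exact absurd (hx.trans hy.symm) (hf hadj)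
    · -- c' x = f(x,1), c' y = f(y,0)
      have hadj : (myc G).Adj (some (x, true)) (some (y, false)) := Or.inl hxy
      exact hf hadj
    · have hadj : (myc G).Adj (some (x, false)) (some (y, true)) := Or.inr (G.symm hxy)
      exact hf hadj
    · have hadj : (myc G).Adj (some (x, false)) (some (y, false)) := Or.inl hxy
      exact hf hadj
  refine ⟨fun x => ⟨if (c' x).val < a.val then (c' x).val else (c' x).val - 1, ?_⟩, ?_⟩
  · have h1 := (c' x).isLt
    have h2 := a.isLt
    have h3 : (c' x).val ≠ a.val := fun hv => hc'ne x (Fin.ext hv)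
    split_ifs <;> omega
  · intro x y hxy e
    apply hc'hom x y hxy
    have ev := congrArg Fin.val e
    simp only at ev
    have h3 : (c' x).val ≠ a.val := fun hv => hc'ne x (Fin.ext hv)
    have h4 : (c' y).val ≠ a.val := fun hv => hc'ne y (Fin.ext hv)
    have h1 := (c' x).isLt
    have h2 := (c' y).isLt
    apply Fin.ext
    split_ifs at ev <;> omega

lemma completeG_not_col {k l : ℕ} (hlk : l < k) : ¬ (completeG k).Colorable l := by
  rintro ⟨f, hf⟩
  have hinj : Function.Injective f := by
    intro i j e
    by_contra hne
    exact hf (show (completeG k).Adj i j from hne) e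
  have hcard := Fintype.card_le_of_injective f hinj
  simp only [Fintype.card_fin] at hcard
  omega

lemma colorable_mono {α : Type} {G : SGraph α} {k l : ℕ} (hkl : k ≤ l) :
    G.Colorable k → G.Colorable l := by
  rintro ⟨f, hf⟩
  refine ⟨fun x => Fin.castLE hkl (f x), fun u v h e => hf h ?_⟩
  exact Fin.castLE_injective hkl e

lemma MMK_not_col (hn : 2 ≤ n) (hm : m ≤ n + 1) : ¬ (MMK n).Colorable m := by
  intro h
  have h1 : (MMK n).Colorable (n + 1) := colorable_mono hm h
  have h2 : (myc (completeG n)).Colorable n := by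
    rcases n with - | k
    · omega
    · exact myc_colorable (by omega) h1
  obtain ⟨k, rfl⟩ : ∃ k, n = k + 1 := ⟨n - 1, by omega⟩
  have h3 : (completeG (k + 1)).Colorable k := myc_colorable (by omega) h2
  exact completeG_not_col (by omega) h3

lemma sh_kill {f : VV n → Fin m} (h1 : N1 f) (h2 : N2 f) (h3 : N3 f) (h4 : N4 f) (h5 : N5 f)
    {u v : VV n} (hs : Sh u v) (e : f u = f v) : False := by
  cases hs with
  | AA x y hxy => exact h1 x y hxy e
  | BA x y hxy => exact h3 x y hxy e
  | pB x => exact h2 x e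
  | CA x y hxy => exact h5.1 x y hxy e
  | CB x y hxy => exact h5.2.1 x y hxy e
  | DA x y hxy => exact h5.2.2.1 x y hxy e
  | Dp x => exact h5.2.2.2.1 x e
  | qB x => exact h5.2.2.2.2 x e
  | rC x => exact h4.1 x e
  | rD x => exact h4.2.1 x e
  | rq => exact h4.2.2 e

lemma allFail (hn : 2 ≤ n) (hm : m ≤ n + 1) {f : VV n → Fin m}
    (h1 : N1 f) (h2 : N2 f) (h3 : N3 f) (h4 : N4 f) (h5 : N5 f) : False := by
  apply MMK_not_col hn hm
  refine ⟨f, ?_⟩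
  intro u v huv e
  rcases adj_shapes huv with hs | hs
  · exact sh_kill h1 h2 h3 h4 h5 hs e
  · exact sh_kill h1 h2 h3 h4 h5 hs e.symm

end Graph
namespace Graph

variable {n m : ℕ} {f g : VV n → Fin m}

lemma hardH1 (hnm : m ≤ n + 1) (hA : ADJ f g) {c : Fin m} {x y : Fin n}
    (hxy : x ≠ y) (hfx : cA f x = c) (hfy : cA f y = c) (hgr : cr g = c)
    (hg1 : N1 g) (hg3 : N3 g) : False := by
  have ginj := hg1.inj
  have hA'c : ∀ b, cA g b ≠ c := by
    intro b hb
    rcases pickNe hxy b with hb' | hb'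
    · exact fAA hA hb' (hfx.trans hb.symm)
    · exact fAA hA hb' (hfy.trans hb.symm)
  have hB'c : ∀ z, cB g z ≠ c := by
    intro z hz
    rcases pickNe hxy z with hz' | hz'
    · exact fAB hA hz' (hfx.trans hz.symm)
    · exact fAB hA hz' (hfy.trans hz.symm)
  have hB'A : ∀ z, cB g z = cA g z := by
    intro z
    by_contra hne
    refine pigeon hnm ginj (hB'c z) ?_ hA'c
    intro w
    rcases eq_or_ne w z with rfl | hwz
    · exact fun e => hne e.symm
    · exact fun e => hg3 z w (Ne.symm hwz) e.symm
  have hqc : cq f ≠ c := fun e => fqr hA (e.trans hgr.symm)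
  refine pigeon hnm ginj hqc ?_ hA'c
  intro w e
  exact fqB hA w ((hB'A w).trans e).symm

lemma hardH2 (hnm : m ≤ n + 1) (hA : ADJ f g) {c : Fin m} {u : Fin n}
    (hfp : cp f = c) (hfB : cB f u = c) (hgr : cr g = c)
    (hg1 : N1 g) (hg3 : N3 g) : False := by
  have ginj := hg1.inj
  have h1 : ∀ b, b ≠ u → cA g b ≠ c := fun b hb e => fBA hA (Ne.symm hb) (hfB.trans e.symm)
  have h2 : ∀ z, cB g z ≠ c := fun z e => fpB hA z (hfp.trans e.symm)
  have h3 : cq f ≠ c := fun e => fqr hA (e.trans hgr.symm)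
  by_cases hex : ∃ w, cA g w = c
  · obtain ⟨w, hw⟩ := hex
    have hwu : w = u := by by_contra hne; exact h1 w hne hw
    subst hwu
    by_cases hsurj : ∀ d, ∃ z, cA g z = d
    · have hBA : ∀ z, cB g z = cA g z := by
        intro z
        obtain ⟨w', hw'⟩ := hsurj (cB g z)
        rcases eq_or_ne w' z with rfl | hne
        · exact hw'.symm
        · exact absurd hw'.symm (hg3 z w' (Ne.symm hne))
      exact h2 w ((hBA w).trans hw)
    · push_neg at hsurj
      obtain ⟨t, ht⟩ := hsurj
      have htc : t ≠ c := fun e => ht w (hw.trans e.symm)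
      have hBz : ∀ z, cB g z = cA g z ∨ cB g z = t := by
        intro z
        by_cases hzr : ∃ w', cA g w' = cB g z
        · obtain ⟨w', hw'⟩ := hzr
          rcases eq_or_ne w' z with rfl | hne
          · exact Or.inl hw'.symm
          · exact absurd hw'.symm (hg3 z w' (Ne.symm hne))
        · push_neg at hzr
          right
          by_contra hnt
          exact pigeon hnm ginj hnt hzr ht
      have hBu : cB g w = t := by
        rcases hBz w with he | he
        · exact absurd (he.trans hw) (h2 w)
        · exact he
      have hCu : cC f w = t := by
        have hnc : cC f w ≠ c := fun e => fCr hA w (e.trans hgr.symm)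
        have hall : ∀ b, cC f w ≠ cA g b := by
          intro b
          rcases eq_or_ne b w with rfl | hb
          · exact fun e => hnc (e.trans hw)
          · exact fCA hA (Ne.symm hb)
        by_contra hnt
        exact pigeon hnm ginj hnt (fun w' e => hall w' e.symm) ht
      have hBb : ∀ b, b ≠ w → cB g b = cA g b := by
        intro b hb
        rcases hBz b with he | he
        · exact he
        · exact absurd (hCu.trans he.symm) (fCB hA (Ne.symm hb))
      have hqt : cq f ≠ t := fun e => fqB hA w (e.trans hBu.symm)
      refine pigeon hnm ginj hqt ?_ ht
      intro w' e
      rcases eq_or_ne w' w with rfl | hb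
      · exact h3 (e.symm.trans hw)
      · exact fqB hA w' (e.symm.trans (hBb w' hb).symm)
  · push_neg at hex
    have hBA : ∀ z, cB g z = cA g z := by
      intro z
      by_contra hne
      refine pigeon hnm ginj (h2 z) ?_ hex
      intro w'
      rcases eq_or_ne w' z with rfl | hwz
      · exact fun e => hne e.symm
      · exact fun e => hg3 z w' (Ne.symm hwz) e.symm
    refine pigeon hnm ginj h3 ?_ hex
    intro w' e
    exact fqB hA w' ((hBA w').trans e).symm

lemma hardH3 (hnm : m ≤ n + 1) (hA : ADJ f g) {c : Fin m} {u v : Fin n} (huv : u ≠ v)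
    (hfB : cB f u = c) (hfA : cA f v = c) (hgr : cr g = c)
    (hg1 : N1 g) : False := by
  have ginj := hg1.inj
  have hA'c : ∀ b, cA g b ≠ c := by
    intro b hb
    rcases eq_or_ne b u with rfl | hbu
    · exact fAA hA (Ne.symm huv) (hfA.trans hb.symm)
    · exact fBA hA (Ne.symm hbu) (hfB.trans hb.symm)
  have hDc : ∀ z, cD f z ≠ c := fun z e => fDr hA z (e.trans hgr.symm)
  have hDA : ∀ z, cD f z = cA g z := by
    intro z
    by_contra hne
    refine pigeon hnm ginj (hDc z) ?_ hA'c
    intro b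
    rcases eq_or_ne b z with rfl | hbz
    · exact fun e => hne e.symm
    · exact fun e => fDA hA (Ne.symm hbz) e.symm
  have hpc : cp g ≠ c := fun e => fBp hA u (hfB.trans e.symm)
  refine pigeon hnm ginj hpc ?_ hA'c
  intro b e
  exact fDp hA b ((hDA b).trans e)

lemma hardH4 (hnm : m ≤ n + 1) (hA : ADJ f g) {c : Fin m} {x y : Fin n} (hxy : x ≠ y)
    (hfC : cC f x = c) (hfA : cA f y = c) (hgp : cp g = c)
    (hg1 : N1 g) : False := by
  have ginj := hg1.inj
  have hA'c : ∀ b, cA g b ≠ c := by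
    intro b hb
    rcases eq_or_ne b y with rfl | hby
    · exact fCA hA hxy (hfC.trans hb.symm)
    · exact fAA hA (Ne.symm hby) (hfA.trans hb.symm)
  have hDc : ∀ z, cD f z ≠ c := fun z e => fDp hA z (e.trans hgp.symm)
  have hDA : ∀ z, cD f z = cA g z := by
    intro z
    by_contra hne
    refine pigeon hnm ginj (hDc z) ?_ hA'c
    intro b
    rcases eq_or_ne b z with rfl | hbz
    · exact fun e => hne e.symm
    · exact fun e => fDA hA (Ne.symm hbz) e.symm
  have hrc : cr g ≠ c := fun e => fCr hA x (hfC.trans e.symm)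
  refine pigeon hnm ginj hrc ?_ hA'c
  intro b e
  exact fDr hA b ((hDA b).trans e)

lemma hardH5 (hnm : m ≤ n + 1) (hA : ADJ f g) {c : Fin m} {x y : Fin n} (hxy : x ≠ y)
    (hfD : cD f x = c) (hfA : cA f y = c) (hgq : cq g = c)
    (hg1 : N1 g) : False := by
  have ginj := hg1.inj
  have hA'c : ∀ b, cA g b ≠ c := by
    intro b hb
    rcases eq_or_ne b y with rfl | hby
    · exact fDA hA hxy (hfD.trans hb.symm)
    · exact fAA hA (Ne.symm hby) (hfA.trans hb.symm)
  have hBc : ∀ z, cB f z ≠ c := fun z e => fBq hA z (e.trans hgq.symm)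
  have hBA : ∀ z, cB f z = cA g z := by
    intro z
    by_contra hne
    refine pigeon hnm ginj (hBc z) ?_ hA'c
    intro b
    rcases eq_or_ne b z with rfl | hbz
    · exact fun e => hne e.symm
    · exact fun e => fBA hA (Ne.symm hbz) e.symm
  have hpc : cp g ≠ c := fun e => fDp hA x (hfD.trans e.symm)
  refine pigeon hnm ginj hpc ?_ hA'c
  intro b e
  exact fBp hA b ((hBA b).trans e)

lemma hardH6 (hnm : m ≤ n + 1) (hA : ADJ f g) {c : Fin m} {x y x' y' : Fin n} (hxy : x ≠ y)
    (hfC : cC f x = c) (hfB : cB f y = c) (hx'y' : x' ≠ y')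
    (hgC : cC g x' = c) (hgB : cB g y' = c) (hg1 : N1 g) : False := by
  have ginj := hg1.inj
  have hA'c : ∀ b, cA g b ≠ c := by
    intro b hb
    rcases pickNe hxy b with h | h
    · exact fCA hA h (hfC.trans hb.symm)
    · exact fBA hA h (hfB.trans hb.symm)
  have hAc : ∀ b, cA f b ≠ c := by
    intro b hb
    rcases pickNe hx'y' b with h | h
    · exact fAC hA (Ne.symm h) (hb.trans hgC.symm)
    · exact fAB hA (Ne.symm h) (hb.trans hgB.symm)
  have hAA' : ∀ b, cA f b = cA g b := by
    intro b
    by_contra hne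
    refine pigeon hnm ginj (hAc b) ?_ hA'c
    intro w'
    rcases eq_or_ne w' b with rfl | hwb
    · exact fun e => hne e.symm
    · exact fun e => fAA hA (Ne.symm hwb) e.symm
  have hyx' : y = x' := by
    by_contra hne
    exact fBC hA hne (hfB.trans hgC.symm)
  have hBb : ∀ b, b ≠ y → cB f b ≠ c := by
    intro b hb e
    exact fBC hA (fun h => hb (h.trans hyx'.symm)) (e.trans hgC.symm)
  have hBA : ∀ b, b ≠ y → cB f b = cA g b := by
    intro b hb
    by_contra hne
    refine pigeon hnm ginj (hBb b hb) ?_ hA'c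
    intro w'
    rcases eq_or_ne w' b with rfl | hwb
    · exact fun e => hne e.symm
    · exact fun e => fBA hA (Ne.symm hwb) e.symm
  have hq' : cq g = cA g y := by
    have hqc : cq g ≠ c := fun e => fBq hA y (hfB.trans e.symm)
    by_contra hne
    refine pigeon hnm ginj hqc ?_ hA'c
    intro w'
    rcases eq_or_ne w' y with rfl | hw'
    · exact fun e => hne e.symm
    · exact fun e => fBq hA w' ((hBA w' hw').trans e)
  have hrq : cr f ≠ cA g y := fun e => frq hA (e.trans hq'.symm)
  have hrc : cr f ≠ c := fun e => frC hA x' (e.trans hgC.symm)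
  have hC' : ∀ z, z ≠ y → cC g z = cA g z := by
    intro z hz
    have hzc : cC g z ≠ c := fun e => fBC hA (Ne.symm hz) (hfB.trans e.symm)
    by_contra hne
    refine pigeon hnm ginj hzc ?_ hA'c
    intro w'
    rcases eq_or_ne w' z with rfl | hwz
    · exact fun e => hne e.symm
    · exact fun e => fAC hA hwz ((hAA' w').trans e)
  refine pigeon hnm ginj hrc ?_ hA'c
  intro w'
  rcases eq_or_ne w' y with rfl | hw'
  · exact fun e => hrq e.symm
  · exact fun e => frC hA w' (e.symm.trans (hC' w' hw').symm)

end Graph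
namespace Graph

variable {n m : ℕ}

theorem col_proper (hn : 2 ≤ n) (hnm : m ≤ n + 1) :
    (expG (MMK n) m).IsHom (completeG m) (fun f => col f) := by
  intro f g hfg
  show col f ≠ col g
  intro heq
  have hA : ADJ f g := fun u v h => hfg u v h
  have hA' : ADJ g f := hA.symm
  have hf := colSpec f
  have hg := colSpec g
  rw [← heq] at hg
  rcases hf with ⟨x, y, hxy, hfx, hfy⟩ | ⟨fN1, hfp, u, hfB⟩ |
    ⟨fN1, fN2, u, v, huv, hfB, hfA⟩ | ⟨fN1, fN2, fN3, hfr, hfd⟩ |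
    ⟨fN1, fN2, fN3, fN4, hfd⟩ | ⟨fN1, fN2, fN3, fN4, fN5⟩
  · -- f case 1
    rcases hg with ⟨x', y', hx'y', hgx, hgy⟩ | ⟨gN1, hgp, u', hgB⟩ |
      ⟨gN1, gN2, u', v', hu'v', hgB, hgA⟩ | ⟨gN1, gN2, gN3, hgr, hgd⟩ |
      ⟨gN1, gN2, gN3, gN4, hgd⟩ | ⟨gN1, gN2, gN3, gN4, gN5⟩
    · rcases pickNe hxy x' with h | h
      · exact fAA hA h (hfx.trans hgx.symm)
      · exact fAA hA h (hfy.trans hgx.symm)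
    · rcases pickNe hxy u' with h | h
      · exact fAB hA h (hfx.trans hgB.symm)
      · exact fAB hA h (hfy.trans hgB.symm)
    · rcases pickNe hxy u' with h | h
      · exact fAB hA h (hfx.trans hgB.symm)
      · exact fAB hA h (hfy.trans hgB.symm)
    · exact hardH1 hnm hA hxy hfx hfy hgr gN1 gN3
    · rcases hgd with ⟨z, w, hzw, hgC, hgA⟩ | ⟨z, w, hzw, hgC, hgB⟩ |
        ⟨z, w, hzw, hgD, hgA⟩ | ⟨z, hgD, hgp⟩ | ⟨z, hgq, hgB⟩
      · rcases pickNe hxy z with h | h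
        · exact fAC hA h (hfx.trans hgC.symm)
        · exact fAC hA h (hfy.trans hgC.symm)
      · rcases pickNe hxy z with h | h
        · exact fAC hA h (hfx.trans hgC.symm)
        · exact fAC hA h (hfy.trans hgC.symm)
      · rcases pickNe hxy z with h | h
        · exact fAD hA h (hfx.trans hgD.symm)
        · exact fAD hA h (hfy.trans hgD.symm)
      · rcases pickNe hxy z with h | h
        · exact fAD hA h (hfx.trans hgD.symm)
        · exact fAD hA h (hfy.trans hgD.symm)
      · rcases pickNe hxy z with h | h
        · exact fAB hA h (hfx.trans hgB.symm)
        · exact fAB hA h (hfy.trans hgB.symm)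
    · exact allFail hn hnm gN1 gN2 gN3 gN4 gN5
  · -- f case 2
    rcases hg with ⟨x', y', hx'y', hgx, hgy⟩ | ⟨gN1, hgp, u', hgB⟩ |
      ⟨gN1, gN2, u', v', hu'v', hgB, hgA⟩ | ⟨gN1, gN2, gN3, hgr, hgd⟩ |
      ⟨gN1, gN2, gN3, gN4, hgd⟩ | ⟨gN1, gN2, gN3, gN4, gN5⟩
    · rcases pickNe hx'y' u with h | h
      · exact fAB hA' h (hgx.trans hfB.symm)
      · exact fAB hA' h (hgy.trans hfB.symm)
    · exact fpB hA u' (hfp.trans hgB.symm)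
    · exact fpB hA u' (hfp.trans hgB.symm)
    · exact hardH2 hnm hA hfp hfB hgr gN1 gN3
    · rcases hgd with ⟨z, w, hzw, hgC, hgA⟩ | ⟨z, w, hzw, hgC, hgB⟩ |
        ⟨z, w, hzw, hgD, hgA⟩ | ⟨z, hgD, hgp⟩ | ⟨z, hgq, hgB⟩
      · rcases pickNe hzw u with h | h
        · exact fBC hA (Ne.symm h) (hfB.trans hgC.symm)
        · exact fBA hA (Ne.symm h) (hfB.trans hgA.symm)
      · exact fpB hA w (hfp.trans hgB.symm)
      · exact fpD hA z (hfp.trans hgD.symm)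
      · exact fpD hA z (hfp.trans hgD.symm)
      · exact fpB hA z (hfp.trans hgB.symm)
    · exact allFail hn hnm gN1 gN2 gN3 gN4 gN5
  · -- f case 3
    rcases hg with ⟨x', y', hx'y', hgx, hgy⟩ | ⟨gN1, hgp, u', hgB⟩ |
      ⟨gN1, gN2, u', v', hu'v', hgB, hgA⟩ | ⟨gN1, gN2, gN3, hgr, hgd⟩ |
      ⟨gN1, gN2, gN3, gN4, hgd⟩ | ⟨gN1, gN2, gN3, gN4, gN5⟩
    · rcases pickNe hx'y' u with h | h
      · exact fAB hA' h (hgx.trans hfB.symm)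
      · exact fAB hA' h (hgy.trans hfB.symm)
    · exact fBp hA u (hfB.trans hgp.symm)
    · rcases eq_or_ne u v' with rfl | h
      · rcases eq_or_ne v u' with rfl | h2
        · exact fAA hA (Ne.symm huv) (hfA.trans hgA.symm)
        · exact fAB hA h2 (hfA.trans hgB.symm)
      · exact fBA hA h (hfB.trans hgA.symm)
    · exact hardH3 hnm hA huv hfB hfA hgr gN1
    · rcases hgd with ⟨z, w, hzw, hgC, hgA2⟩ | ⟨z, w, hzw, hgC, hgB2⟩ |
        ⟨z, w, hzw, hgD, hgA2⟩ | ⟨z, hgD, hgp⟩ | ⟨z, hgq, hgB2⟩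
      · rcases pickNe hzw v with h | h
        · exact fAC hA (Ne.symm h) (hfA.trans hgC.symm)
        · exact fAA hA (Ne.symm h) (hfA.trans hgA2.symm)
      · rcases pickNe hzw v with h | h
        · exact fAC hA (Ne.symm h) (hfA.trans hgC.symm)
        · exact fAB hA (Ne.symm h) (hfA.trans hgB2.symm)
      · rcases pickNe hzw v with h | h
        · exact fAD hA (Ne.symm h) (hfA.trans hgD.symm)
        · exact fAA hA (Ne.symm h) (hfA.trans hgA2.symm)
      · exact fBp hA u (hfB.trans hgp.symm)
      · exact fBq hA u (hfB.trans hgq.symm)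
    · exact allFail hn hnm gN1 gN2 gN3 gN4 gN5
  · -- f case 4
    rcases hg with ⟨x', y', hx'y', hgx, hgy⟩ | ⟨gN1, hgp, u', hgB⟩ |
      ⟨gN1, gN2, u', v', hu'v', hgB, hgA⟩ | ⟨gN1, gN2, gN3, hgr, hgd⟩ |
      ⟨gN1, gN2, gN3, gN4, hgd⟩ | ⟨gN1, gN2, gN3, gN4, gN5⟩
    · exact hardH1 hnm hA' hx'y' hgx hgy hfr fN1 fN3
    · exact hardH2 hnm hA' hgp hgB hfr fN1 fN3
    · exact hardH3 hnm hA' hu'v' hgB hgA hfr fN1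
    · rcases hfd with ⟨z, hfC⟩ | ⟨z, hfD⟩ | hfq
      · exact fCr hA z (hfC.trans hgr.symm)
      · exact fDr hA z (hfD.trans hgr.symm)
      · exact fqr hA (hfq.trans hgr.symm)
    · rcases hgd with ⟨z, w, hzw, hgC, hgA⟩ | ⟨z, w, hzw, hgC, hgB⟩ |
        ⟨z, w, hzw, hgD, hgA⟩ | ⟨z, hgD, hgp⟩ | ⟨z, hgq, hgB⟩
      · exact frC hA z (hfr.trans hgC.symm)
      · exact frC hA z (hfr.trans hgC.symm)
      · exact frD hA z (hfr.trans hgD.symm)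
      · exact frD hA z (hfr.trans hgD.symm)
      · exact frq hA (hfr.trans hgq.symm)
    · exact allFail hn hnm gN1 gN2 gN3 gN4 gN5
  · -- f case 5
    rcases hg with ⟨x', y', hx'y', hgx, hgy⟩ | ⟨gN1, hgp, u', hgB⟩ |
      ⟨gN1, gN2, u', v', hu'v', hgB, hgA⟩ | ⟨gN1, gN2, gN3, hgr, hgd⟩ |
      ⟨gN1, gN2, gN3, gN4, hgd⟩ | ⟨gN1, gN2, gN3, gN4, gN5⟩
    · rcases hfd with ⟨z, w, hzw, hfC, hfA⟩ | ⟨z, w, hzw, hfC, hfB⟩ |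
        ⟨z, w, hzw, hfD, hfA⟩ | ⟨z, hfD, hfp⟩ | ⟨z, hfq, hfB⟩
      · rcases pickNe hx'y' z with h | h
        · exact fAC hA' h (hgx.trans hfC.symm)
        · exact fAC hA' h (hgy.trans hfC.symm)
      · rcases pickNe hx'y' z with h | h
        · exact fAC hA' h (hgx.trans hfC.symm)
        · exact fAC hA' h (hgy.trans hfC.symm)
      · rcases pickNe hx'y' z with h | h
        · exact fAD hA' h (hgx.trans hfD.symm)
        · exact fAD hA' h (hgy.trans hfD.symm)
      · rcases pickNe hx'y' z with h | h
        · exact fAD hA' h (hgx.trans hfD.symm)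
        · exact fAD hA' h (hgy.trans hfD.symm)
      · rcases pickNe hx'y' z with h | h
        · exact fAB hA' h (hgx.trans hfB.symm)
        · exact fAB hA' h (hgy.trans hfB.symm)
    · rcases hfd with ⟨z, w, hzw, hfC, hfA⟩ | ⟨z, w, hzw, hfC, hfB⟩ |
        ⟨z, w, hzw, hfD, hfA⟩ | ⟨z, hfD, hfp⟩ | ⟨z, hfq, hfB⟩
      · rcases pickNe hzw u' with h | h
        · exact fBC hA' (Ne.symm h) (hgB.trans hfC.symm)
        · exact fBA hA' (Ne.symm h) (hgB.trans hfA.symm)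
      · exact fpB hA' w (hgp.trans hfB.symm)
      · exact fpD hA' z (hgp.trans hfD.symm)
      · exact fpD hA' z (hgp.trans hfD.symm)
      · exact fpB hA' z (hgp.trans hfB.symm)
    · rcases hfd with ⟨z, w, hzw, hfC, hfA⟩ | ⟨z, w, hzw, hfC, hfB⟩ |
        ⟨z, w, hzw, hfD, hfA⟩ | ⟨z, hfD, hfp⟩ | ⟨z, hfq, hfB⟩
      · rcases pickNe hzw v' with h | h
        · exact fAC hA' (Ne.symm h) (hgA.trans hfC.symm)
        · exact fAA hA' (Ne.symm h) (hgA.trans hfA.symm)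
      · rcases pickNe hzw v' with h | h
        · exact fAC hA' (Ne.symm h) (hgA.trans hfC.symm)
        · exact fAB hA' (Ne.symm h) (hgA.trans hfB.symm)
      · rcases pickNe hzw v' with h | h
        · exact fAD hA' (Ne.symm h) (hgA.trans hfD.symm)
        · exact fAA hA' (Ne.symm h) (hgA.trans hfA.symm)
      · exact fBp hA' u' (hgB.trans hfp.symm)
      · exact fBq hA' u' (hgB.trans hfq.symm)
    · rcases hfd with ⟨z, w, hzw, hfC, hfA⟩ | ⟨z, w, hzw, hfC, hfB⟩ |
        ⟨z, w, hzw, hfD, hfA⟩ | ⟨z, hfD, hfp⟩ | ⟨z, hfq, hfB⟩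
      · exact fCr hA z (hfC.trans hgr.symm)
      · exact fCr hA z (hfC.trans hgr.symm)
      · exact fDr hA z (hfD.trans hgr.symm)
      · exact fDr hA z (hfD.trans hgr.symm)
      · exact fqr hA (hfq.trans hgr.symm)
    · rcases hfd with ⟨z, w, hzw, hfC, hfA⟩ | ⟨z, w, hzw, hfC, hfB⟩ |
        ⟨z, w, hzw, hfD, hfA⟩ | ⟨z, hfD, hfp⟩ | ⟨z, hfq, hfB⟩ <;>
      rcases hgd with ⟨z', w', hz'w', hgC, hgA⟩ | ⟨z', w', hz'w', hgC, hgB⟩ |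
        ⟨z', w', hz'w', hgD, hgA⟩ | ⟨z', hgD, hgp⟩ | ⟨z', hgq, hgB⟩
      -- (5a, ·)
      · rcases pickNe hz'w' w with h | h
        · exact fAC hA (Ne.symm h) (hfA.trans hgC.symm)
        · exact fAA hA (Ne.symm h) (hfA.trans hgA.symm)
      · rcases pickNe hz'w' w with h | h
        · exact fAC hA (Ne.symm h) (hfA.trans hgC.symm)
        · exact fAB hA (Ne.symm h) (hfA.trans hgB.symm)
      · rcases pickNe hz'w' w with h | h
        · exact fAD hA (Ne.symm h) (hfA.trans hgD.symm)
        · exact fAA hA (Ne.symm h) (hfA.trans hgA.symm)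
      · exact hardH4 hnm hA hzw hfC hfA hgp gN1
      · rcases eq_or_ne w z' with rfl | h
        · exact fCB hA hzw (hfC.trans hgB.symm)
        · exact fAB hA h (hfA.trans hgB.symm)
      -- (5b, ·)
      · rcases pickNe hzw w' with h | h
        · exact fAC hA' (Ne.symm h) (hgA.trans hfC.symm)
        · exact fAB hA' (Ne.symm h) (hgA.trans hfB.symm)
      · exact hardH6 hnm hA hzw hfC hfB hz'w' hgC hgB gN1
      · rcases eq_or_ne w w' with rfl | h
        · exact fCA hA hzw (hfC.trans hgA.symm)
        · exact fBA hA h (hfB.trans hgA.symm)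
      · exact fBp hA w (hfB.trans hgp.symm)
      · exact fBq hA w (hfB.trans hgq.symm)
      -- (5c, ·)
      · rcases pickNe hz'w' w with h | h
        · exact fAC hA (Ne.symm h) (hfA.trans hgC.symm)
        · exact fAA hA (Ne.symm h) (hfA.trans hgA.symm)
      · rcases pickNe hz'w' w with h | h
        · exact fAC hA (Ne.symm h) (hfA.trans hgC.symm)
        · exact fAB hA (Ne.symm h) (hfA.trans hgB.symm)
      · rcases pickNe hz'w' w with h | h
        · exact fAD hA (Ne.symm h) (hfA.trans hgD.symm)
        · exact fAA hA (Ne.symm h) (hfA.trans hgA.symm)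
      · exact fDp hA z (hfD.trans hgp.symm)
      · exact hardH5 hnm hA hzw hfD hfA hgq gN1
      -- (5d, ·)
      · exact hardH4 hnm hA' hz'w' hgC hgA hfp fN1
      · exact fpB hA w' (hfp.trans hgB.symm)
      · exact fpD hA z' (hfp.trans hgD.symm)
      · exact fDp hA z (hfD.trans hgp.symm)
      · exact fpB hA z' (hfp.trans hgB.symm)
      -- (5e, ·)
      · rcases pickNe hz'w' z with h | h
        · exact fBC hA (Ne.symm h) (hfB.trans hgC.symm)
        · exact fBA hA (Ne.symm h) (hfB.trans hgA.symm)
      · exact fqB hA w' (hfq.trans hgB.symm)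
      · exact hardH5 hnm hA' hz'w' hgD hgA hfq fN1
      · exact fBp hA z (hfB.trans hgp.symm)
      · exact fqB hA z' (hfq.trans hgB.symm)
    · exact allFail hn hnm gN1 gN2 gN3 gN4 gN5
  · exact allFail hn hnm fN1 fN2 fN3 fN4 fN5

end Graph
namespace Graph

variable {n m : ℕ}

lemma expG_colorable (hn : 2 ≤ n) (hnm : m ≤ n + 1) :
    (expG (MMK n) m).Colorable m :=
  ⟨fun f => col f, col_proper hn hnm⟩

lemma expG_lower {k : ℕ} (h : (expG (MMK n) m).Colorable k) : m ≤ k := by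
  obtain ⟨h0, hh⟩ := h
  have hinj : Function.Injective (fun i : Fin m => h0 (fun _ => i)) := by
    intro i j e
    by_contra hne
    have hadj : (expG (MMK n) m).Adj (fun _ => i) (fun _ => j) := fun u v _ => hne
    exact hh hadj e
  have := Fintype.card_le_of_injective _ hinj
  simpa using this

end Graph




namespace Graph

/-- Theorem: for `n ≥ 2` and `1 ≤ m ≤ n + 1`,
`χ(K_m^{M(M(K_n))}) = m`. -/
theorem chromNum_expG_MMK (n m : ℕ) (hn : 2 ≤ n) (hm : 0 < m)
    (hmn : m ≤ n + 1) :
    (SGraph.expG (SGraph.MMK n) m).chromNum = m := by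
  unfold SGraph.chromNum
  apply le_antisymm
  · exact sInf_le ⟨m, expG_colorable hn hmn, rfl⟩
  · apply le_sInf
    rintro b ⟨k, hk, rfl⟩
    show (m : ℕ∞) ≤ (k : ℕ∞)
    exact_mod_cast expG_lower hk

end Graph
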